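/- A point (g,h) ∈ SL(2,ℝ) × SL(2,ℝ) is a regular point of the commutator map p(g,h)=[g,h] (i.e., dp|_(g,h) is surjective onto 𝔰𝔩(2,ℝ)) if and only if 𝔤^g ∩ 𝔤^h = {0}. -/
import Mathlib


open Matrix

abbrev SL2R := Matrix.SpecialLinearGroup (Fin 2) ℝ

def sl2 : Submodule ℝ (Matrix (Fin 2) (Fin 2) ℝ) where
  carrier := {X | Matrix.trace X = 0}
  add_mem' := by intro X Y hX hY; simp_all [Set.mem_setOf_eq]
  zero_mem' := by simp
  smul_mem' := by intro c X h; simp_all [Set.mem_setOf_eq]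

def gfix (g : SL2R) : Submodule ℝ (Matrix (Fin 2) (Fin 2) ℝ) where
  carrier := {X | Matrix.trace X = 0 ∧
    (g : Matrix (Fin 2) (Fin 2) ℝ) * X * (g : Matrix (Fin 2) (Fin 2) ℝ)⁻¹ = X}
  add_mem' := by
    rintro X Y ⟨hX1, hX2⟩ ⟨hY1, hY2⟩
    exact ⟨by simp [hX1, hY1], by rw [mul_add, add_mul, hX2, hY2]⟩
  zero_mem' := by simp
  smul_mem' := by
    rintro c X ⟨h1, h2⟩
    exact ⟨by simp [h1], by rw [mul_smul_comm, smul_mul_assoc, h2]⟩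


/-- Ad(k)X = k X k⁻¹ for matrices. -/
noncomputable def Ad (k X : Matrix (Fin 2) (Fin 2) ℝ) : Matrix (Fin 2) (Fin 2) ℝ :=
  k * X * k⁻¹

/-- The derivative of the commutator map at (g,h) in left trivialization:
`dp|_(g,h)(ξ,η) = Ad(hgh⁻¹)ξ − Ad(hg)ξ + Ad(hg)η − Ad(h)η`. -/
noncomputable def dpExpr (g h : SL2R) (ξ η : Matrix (Fin 2) (Fin 2) ℝ) :
    Matrix (Fin 2) (Fin 2) ℝ :=
  Ad ((h : Matrix (Fin 2) (Fin 2) ℝ) * (g : Matrix (Fin 2) (Fin 2) ℝ) *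
      (h : Matrix (Fin 2) (Fin 2) ℝ)⁻¹) ξ -
    Ad ((h : Matrix (Fin 2) (Fin 2) ℝ) * (g : Matrix (Fin 2) (Fin 2) ℝ)) ξ +
    Ad ((h : Matrix (Fin 2) (Fin 2) ℝ) * (g : Matrix (Fin 2) (Fin 2) ℝ)) η -
    Ad (h : Matrix (Fin 2) (Fin 2) ℝ) η

namespace Stmt9Aux

abbrev Mat := Matrix (Fin 2) (Fin 2) ℝ

lemma trace_mul_expand (X Y : Mat) :
    Matrix.trace (X * Y) = X 0 0 * Y 0 0 + X 0 1 * Y 1 0 + X 1 0 * Y 0 1 + X 1 1 * Y 1 1 := by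
  simp [Matrix.trace, Matrix.mul_apply, Fin.sum_univ_two]
  ring

lemma eq_zero_of_trace_mul (X : Mat) (hX : ∀ Y : Mat, Matrix.trace (X * Y) = 0) : X = 0 := by
  have h1 := hX !![1,0;0,0]
  have h2 := hX !![0,1;0,0]
  have h3 := hX !![0,0;1,0]
  have h4 := hX !![0,0;0,1]
  rw [trace_mul_expand] at h1 h2 h3 h4
  norm_num at h1 h2 h3 h4
  ext i j
  fin_cases i <;> fin_cases j <;> simp_all

lemma scalar_of_trace_mul (X : Mat)
    (hX : ∀ Z : Mat, Matrix.trace Z = 0 → Matrix.trace (X * Z) = 0) :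
    X = (X 0 0) • (1 : Mat) := by
  have h1 := hX !![0,1;0,0] (by simp [Matrix.trace, Fin.sum_univ_two])
  have h2 := hX !![0,0;1,0] (by simp [Matrix.trace, Fin.sum_univ_two])
  have h3 := hX !![1,0;0,-1] (by simp [Matrix.trace, Fin.sum_univ_two])
  rw [trace_mul_expand] at h1 h2 h3
  norm_num at h1 h2 h3
  ext i j
  fin_cases i <;> fin_cases j <;> simp_all [Matrix.one_apply] <;> linarith

lemma exists_repr (f : Mat →ₗ[ℝ] ℝ) : ∃ X : Mat, ∀ Y : Mat, Matrix.trace (X * Y) = f Y := by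
  refine ⟨!![f !![1,0;0,0], f !![0,0;1,0]; f !![0,1;0,0], f !![0,0;0,1]], fun Y => ?_⟩
  have hY : Y = Y 0 0 • !![1,0;0,0] + Y 0 1 • !![0,1;0,0] + Y 1 0 • !![0,0;1,0] +
      Y 1 1 • !![0,0;0,1] := by
    ext i j; fin_cases i <;> fin_cases j <;> simp
  rw [trace_mul_expand]
  conv_rhs => rw [hY]
  simp only [map_add, _root_.map_smul, smul_eq_mul]
  norm_num
  ring

lemma trace_cycle (K X Y : Mat) :
    Matrix.trace ((K * X * K⁻¹) * Y) = Matrix.trace (X * (K⁻¹ * Y * K)) := by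
  have e : (K * X * K⁻¹) * Y = K * (X * K⁻¹ * Y) := by simp only [mul_assoc]
  rw [e, Matrix.trace_mul_comm]
  congr 1
  simp only [mul_assoc]

lemma comm_inv (X K : Mat) (hK : K * K⁻¹ = 1) (hK' : K⁻¹ * K = 1) (h2 : X * K = K * X) :
    X * K⁻¹ = K⁻¹ * X := by
  have e : K⁻¹ * ((X * K) * K⁻¹) = K⁻¹ * ((K * X) * K⁻¹) := by rw [h2]
  simp only [mul_assoc] at e
  rw [hK, mul_one, ← mul_assoc, hK', one_mul] at e
  exact e.symm

lemma trace_conj (X K ξ : Mat) (h1 : K⁻¹ * K = 1) (h2 : X * K = K * X) :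
    Matrix.trace (X * (K * ξ * K⁻¹)) = Matrix.trace (X * ξ) := by
  have e1 : X * (K * ξ * K⁻¹) = K * (X * ξ * K⁻¹) := by
    simp only [← mul_assoc]; rw [h2]
  rw [e1, Matrix.trace_mul_comm, mul_assoc, h1, mul_one]

lemma trace_conj' (X K ξ : Mat) (h1 : K * K⁻¹ = 1) (h1' : K⁻¹ * K = 1) (h2 : X * K = K * X) :
    Matrix.trace (X * (K⁻¹ * ξ * K)) = Matrix.trace (X * ξ) := by
  have h2' := comm_inv X K h1 h1' h2
  have e1 : X * (K⁻¹ * ξ * K) = K⁻¹ * (X * ξ * K) := by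
    simp only [← mul_assoc]; rw [h2']
  rw [e1, Matrix.trace_mul_comm, mul_assoc, h1, mul_one]

/-- Conjugation-type linear map `X ↦ A * X * B`. -/
noncomputable def conjMap (A B : Mat) : Mat →ₗ[ℝ] Mat where
  toFun X := A * X * B
  map_add' X Y := by noncomm_ring
  map_smul' c X := by simp [Matrix.mul_smul, Matrix.smul_mul]

lemma dp_eq (g h : SL2R) (ξ η : Mat) :
    dpExpr g h ξ η =
      ((h : Mat) * (g : Mat)) *
        (((h : Mat)⁻¹ * ξ * (h : Mat) - ξ) + (η - (g : Mat)⁻¹ * η * (g : Mat))) *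
        ((h : Mat) * (g : Mat))⁻¹ := by
  have hgd : IsUnit (Matrix.det (g : Mat)) := by
    rw [Matrix.SpecialLinearGroup.det_coe]; exact isUnit_one
  have hhd : IsUnit (Matrix.det (h : Mat)) := by
    rw [Matrix.SpecialLinearGroup.det_coe]; exact isUnit_one
  have cg : ∀ x : Mat, (g : Mat) * ((g : Mat)⁻¹ * x) = x := fun x =>
    Matrix.mul_nonsing_inv_cancel_left _ _ hgd
  have cg' : ∀ x : Mat, (g : Mat)⁻¹ * ((g : Mat) * x) = x := fun x =>
    Matrix.nonsing_inv_mul_cancel_left _ _ hgd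
  have ch : ∀ x : Mat, (h : Mat) * ((h : Mat)⁻¹ * x) = x := fun x =>
    Matrix.mul_nonsing_inv_cancel_left _ _ hhd
  have ch' : ∀ x : Mat, (h : Mat)⁻¹ * ((h : Mat) * x) = x := fun x =>
    Matrix.nonsing_inv_mul_cancel_left _ _ hhd
  simp only [dpExpr, Ad, Matrix.mul_inv_rev, Matrix.nonsing_inv_nonsing_inv _ hhd,
    mul_add, add_mul, mul_sub, sub_mul, mul_assoc, cg, cg', ch, ch']
  abel

end Stmt9Aux

open Stmt9Aux in
/-- (g,h) is regular for the commutator map iff 𝔤^g ∩ 𝔤^h = 0. -/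
theorem stmt9 (g h : SL2R) :
    (∀ Z : Matrix (Fin 2) (Fin 2) ℝ, Matrix.trace Z = 0 →
      ∃ ξ η : Matrix (Fin 2) (Fin 2) ℝ, Matrix.trace ξ = 0 ∧ Matrix.trace η = 0 ∧
        dpExpr g h ξ η = Z) ↔ gfix g ⊓ gfix h = ⊥ := by
  have hgd : IsUnit (Matrix.det (g : Mat)) := by
    rw [Matrix.SpecialLinearGroup.det_coe]; exact isUnit_one
  have hhd : IsUnit (Matrix.det (h : Mat)) := by
    rw [Matrix.SpecialLinearGroup.det_coe]; exact isUnit_one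
  set G : Mat := (g : Mat) with hGdef
  set H : Mat := (h : Mat) with hHdef
  have hG1 : G * G⁻¹ = 1 := Matrix.mul_nonsing_inv _ hgd
  have hG1' : G⁻¹ * G = 1 := Matrix.nonsing_inv_mul _ hgd
  have hH1 : H * H⁻¹ = 1 := Matrix.mul_nonsing_inv _ hhd
  have hH1' : H⁻¹ * H = 1 := Matrix.nonsing_inv_mul _ hhd
  have hKd : IsUnit (Matrix.det (H * G)) := by rw [Matrix.det_mul]; exact hhd.mul hgd
  have hK1 : (H * G) * (H * G)⁻¹ = 1 := Matrix.mul_nonsing_inv _ hKd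
  have hK1' : (H * G)⁻¹ * (H * G) = 1 := Matrix.nonsing_inv_mul _ hKd
  constructor
  · -- regular ⟹ trivial intersection
    intro hsurj
    rw [eq_bot_iff]
    intro X hX
    rw [Submodule.mem_inf] at hX
    obtain ⟨hXa, hXb⟩ := hX
    obtain ⟨hXtr, hXg⟩ := hXa
    obtain ⟨-, hXh⟩ := hXb
    rw [Submodule.mem_bot]
    have hcg : X * G = G * X := by
      conv_lhs => rw [← hXg]
      rw [mul_assoc, hG1', mul_one]
    have hch : X * H = H * X := by
      conv_lhs => rw [← hXh]
      rw [mul_assoc, hH1', mul_one]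
    have hcK : X * (H * G) = (H * G) * X := by
      rw [← mul_assoc, hch, mul_assoc, hcg, ← mul_assoc]
    have key : ∀ Z : Mat, Matrix.trace Z = 0 → Matrix.trace (X * Z) = 0 := by
      intro Z hZ
      obtain ⟨ξ, η, -, -, hdp⟩ := hsurj Z hZ
      rw [← hdp, dp_eq g h ξ η, ← hGdef, ← hHdef,
        trace_conj X (H * G) _ hK1' hcK,
        mul_add, mul_sub, mul_sub, Matrix.trace_add, Matrix.trace_sub, Matrix.trace_sub,
        trace_conj' X H ξ hH1 hH1' hch, trace_conj' X G η hG1 hG1' hcg]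
      ring
    have hs := scalar_of_trace_mul X key
    have h0 : X 0 0 = 0 := by
      rw [hs] at hXtr
      simp [Matrix.trace_smul, Matrix.trace_one] at hXtr
      linarith
    rw [hs, h0, zero_smul]
  · -- trivial intersection ⟹ regular
    intro hbot Z hZ
    set T : Mat →ₗ[ℝ] Mat := conjMap H⁻¹ H - LinearMap.id with hTdef
    set S : Mat →ₗ[ℝ] Mat := LinearMap.id - conjMap G⁻¹ G with hSdef
    have hTapp : ∀ ξ : Mat, T ξ = H⁻¹ * ξ * H - ξ := fun ξ => rfl
    have hSapp : ∀ η : Mat, S η = η - G⁻¹ * η * G := fun η => rfl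
    set U : Submodule ℝ Mat := LinearMap.range T ⊔ LinearMap.range S with hUdef
    have hU : sl2 ≤ U := by
      by_contra hc
      obtain ⟨z, hz1, hz2⟩ := SetLike.not_le_iff_exists.mp hc
      obtain ⟨f, hfz, hfU⟩ := Submodule.exists_dual_map_eq_bot_of_notMem hz2 inferInstance
      have hker : ∀ u ∈ U, f u = 0 := by
        intro u hu
        have hm : f u ∈ U.map f := Submodule.mem_map_of_mem hu
        rw [hfU] at hm
        exact (Submodule.mem_bot ℝ).mp hm
      obtain ⟨X, hXrep⟩ := exists_repr f
      have hTX : ∀ ξ : Mat, Matrix.trace (X * (H⁻¹ * ξ * H - ξ)) = 0 := by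
        intro ξ
        rw [← hTapp, hXrep]
        exact hker _ (Submodule.mem_sup_left (LinearMap.mem_range_self T ξ))
      have hSX : ∀ η : Mat, Matrix.trace (X * (η - G⁻¹ * η * G)) = 0 := by
        intro η
        rw [← hSapp, hXrep]
        exact hker _ (Submodule.mem_sup_right (LinearMap.mem_range_self S η))
      have hfixH : H * X * H⁻¹ = X := by
        refine sub_eq_zero.mp (eq_zero_of_trace_mul _ fun Y => ?_)
        rw [sub_mul, Matrix.trace_sub, trace_cycle, ← Matrix.trace_sub, ← mul_sub]
        exact hTX Y
      have hfixG : G * X * G⁻¹ = X := by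
        refine sub_eq_zero.mp (eq_zero_of_trace_mul _ fun Y => ?_)
        rw [sub_mul, Matrix.trace_sub, trace_cycle, ← Matrix.trace_sub, ← mul_sub,
          ← neg_sub Y (G⁻¹ * Y * G), mul_neg, Matrix.trace_neg, hSX Y, neg_zero]
      set c : ℝ := Matrix.trace X / 2 with hcdef
      have hX0tr : Matrix.trace (X - c • (1 : Mat)) = 0 := by
        rw [Matrix.trace_sub, Matrix.trace_smul, Matrix.trace_one]
        simp [hcdef]
      have hX0G : G * (X - c • (1 : Mat)) * G⁻¹ = X - c • (1 : Mat) := by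
        rw [mul_sub, sub_mul, hfixG, mul_smul_comm, smul_mul_assoc, mul_one, hG1]
      have hX0H : H * (X - c • (1 : Mat)) * H⁻¹ = X - c • (1 : Mat) := by
        rw [mul_sub, sub_mul, hfixH, mul_smul_comm, smul_mul_assoc, mul_one, hH1]
      have hmem : X - c • (1 : Mat) ∈ gfix g ⊓ gfix h :=
        Submodule.mem_inf.mpr ⟨⟨hX0tr, hX0G⟩, ⟨hX0tr, hX0H⟩⟩
      rw [hbot, Submodule.mem_bot] at hmem
      have hXs : X = c • (1 : Mat) := by
        have := sub_eq_zero.mp hmem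
        exact this
      have hztr : Matrix.trace z = 0 := hz1
      have : f z = 0 := by
        rw [← hXrep z, hXs, smul_mul_assoc, one_mul, Matrix.trace_smul, hztr, smul_zero]
      exact hfz this
    -- now solve
    have htrZ' : Matrix.trace ((H * G)⁻¹ * Z * (H * G)) = 0 := by
      rw [Matrix.trace_mul_comm, ← mul_assoc, hK1, one_mul]
      exact hZ
    have hZ'U : (H * G)⁻¹ * Z * (H * G) ∈ U := hU htrZ'
    rw [Submodule.mem_sup] at hZ'U
    obtain ⟨a, ha, b, hb, hab⟩ := hZ'U
    obtain ⟨ξ, rfl⟩ := ha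
    obtain ⟨η, rfl⟩ := hb
    rw [hTapp, hSapp] at hab
    refine ⟨ξ - (Matrix.trace ξ / 2) • 1, η - (Matrix.trace η / 2) • 1, ?_, ?_, ?_⟩
    · rw [Matrix.trace_sub, Matrix.trace_smul, Matrix.trace_one]; simp
    · rw [Matrix.trace_sub, Matrix.trace_smul, Matrix.trace_one]; simp
    · rw [dp_eq, ← hGdef, ← hHdef]
      have e1 : H⁻¹ * (ξ - (Matrix.trace ξ / 2) • 1) * H - (ξ - (Matrix.trace ξ / 2) • 1) =
          H⁻¹ * ξ * H - ξ := by
        rw [mul_sub, sub_mul, mul_smul_comm, smul_mul_assoc, mul_one, hH1']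
        abel
      have e2 : (η - (Matrix.trace η / 2) • 1) - G⁻¹ * (η - (Matrix.trace η / 2) • 1) * G =
          η - G⁻¹ * η * G := by
        rw [mul_sub, sub_mul, mul_smul_comm, smul_mul_assoc, mul_one, hG1']
        abel
      rw [e1, e2, hab]
      simp only [← mul_assoc]
      rw [hK1, one_mul, mul_assoc, mul_assoc, ← mul_assoc H G, hK1, mul_one]
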